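/- (Bahadur representation) Let π be a probability distribution on {0,1}^d with mean vector m ∈ (0,1)^d. Then for every γ ∈ {0,1}^d, π(γ) = q^⊓_m(γ) · ∑_{I ⊆ {1,…,d}} c_I^π u_I^π(γ), where q^⊓_m is the product (independent Bernoulli) distribution with means m, u_I^π(γ) := ∏_{i∈I} (γ_i − m_i)/√(m_i(1−m_i)), and c_I^π := E_π[u_I^π(Γ)]. -/

import Mathlib

open Finset

/-- Bahadur representation of a binary distribution. -/
theorem stmt_4 (d : ℕ) (π : (Fin d → Bool) → ℝ)
    (hπ : ∀ γ, 0 ≤ π γ) (hsum : ∑ γ : Fin d → Bool, π γ = 1)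
    (m : Fin d → ℝ) (h0 : ∀ i, 0 < m i) (h1 : ∀ i, m i < 1)
    (hmean : ∀ i, ∑ γ : Fin d → Bool, π γ * (if γ i then (1:ℝ) else 0) = m i)
    (q : (Fin d → Bool) → ℝ)
    (hq : ∀ γ, q γ = ∏ i : Fin d, (if γ i then m i else 1 - m i))
    (u : Finset (Fin d) → (Fin d → Bool) → ℝ)
    (hu : ∀ I γ, u I γ =
      ∏ i ∈ I, ((if γ i then (1:ℝ) else 0) - m i) / Real.sqrt (m i * (1 - m i)))
    (c : Finset (Fin d) → ℝ)
    (hc : ∀ I, c I = ∑ γ : Fin d → Bool, π γ * u I γ) :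
    ∀ γ : Fin d → Bool, π γ = q γ * ∑ I : Finset (Fin d), c I * u I γ := by
  intro γ
  set x : Fin d → (Fin d → Bool) → ℝ :=
    fun i δ => ((if δ i then (1:ℝ) else 0) - m i) / Real.sqrt (m i * (1 - m i)) with hx
  have hq_pos : 0 < q γ := by
    rw [hq]
    refine Finset.prod_pos (fun i _ => ?_)
    by_cases h : γ i <;> simp [h]
    · exact h0 i
    · linarith [h1 i]
  have coord : ∀ (i : Fin d) (δ : Fin d → Bool),
      x i δ * x i γ + 1 =
        if δ i = γ i then (if γ i then (m i)⁻¹ else (1 - m i)⁻¹) else 0 := by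
    intro i δ
    have hp0 := h0 i
    have hp1 := h1 i
    have hpos : 0 < m i * (1 - m i) := by nlinarith
    have hs2 : Real.sqrt (m i * (1 - m i)) * Real.sqrt (m i * (1 - m i)) = m i * (1 - m i) :=
      Real.mul_self_sqrt (le_of_lt hpos)
    have hs : Real.sqrt (m i * (1 - m i)) ≠ 0 := by
      intro h
      rw [h] at hs2
      nlinarith
    have hm : m i ≠ 0 := ne_of_gt hp0
    have hm1 : (1 : ℝ) - m i ≠ 0 := by linarith
    simp only [hx]
    generalize Real.sqrt (m i * (1 - m i)) = s at hs2 hs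
    rcases Bool.eq_false_or_eq_true (δ i) with hδ | hδ <;>
      rcases Bool.eq_false_or_eq_true (γ i) with hγ | hγ <;>
        simp only [hδ, hγ, if_true, if_false, Bool.false_eq_true, Bool.true_eq_false] <;>
          rw [div_mul_div_comm, hs2] <;> field_simp <;> (first | ring1 | (left; first | trivial | ring1))
  have key : ∀ δ : Fin d → Bool,
      (∑ I : Finset (Fin d), u I δ * u I γ) = if δ = γ then (q γ)⁻¹ else 0 := by
    intro δ
    have step : ∀ I : Finset (Fin d), u I δ * u I γ = ∏ i ∈ I, (x i δ * x i γ) := by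
      intro I
      rw [hu, hu, ← Finset.prod_mul_distrib]
    have expand : (∑ I : Finset (Fin d), u I δ * u I γ)
        = ∏ i : Fin d, (x i δ * x i γ + 1) := by
      rw [Finset.prod_add]
      simp only [Finset.prod_const_one, mul_one]
      rw [← Finset.powerset_univ]
      exact Finset.sum_congr rfl fun I _ => step I
    rw [expand]
    by_cases hδγ : δ = γ
    · subst hδγ
      rw [if_pos rfl, hq, ← Finset.prod_inv_distrib]
      refine Finset.prod_congr rfl fun i _ => ?_
      rw [coord i δ, if_pos rfl]
      by_cases h : δ i <;> simp [h]
    · rw [if_neg hδγ]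
      have : ∃ i, δ i ≠ γ i := by
        by_contra h
        push_neg at h
        exact hδγ (funext h)
      obtain ⟨i, hi⟩ := this
      exact Finset.prod_eq_zero (Finset.mem_univ i) (by rw [coord i δ, if_neg hi])
  have swap : (∑ I : Finset (Fin d), c I * u I γ)
      = ∑ δ : Fin d → Bool, π δ * ∑ I : Finset (Fin d), u I δ * u I γ := by
    simp only [hc, Finset.sum_mul, Finset.mul_sum, mul_assoc]
    rw [Finset.sum_comm]
  rw [swap]
  simp only [key, mul_ite, mul_zero]
  rw [Finset.sum_ite_eq' Finset.univ γ (fun δ => π δ * (q γ)⁻¹)]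
  simp only [Finset.mem_univ, if_true]
  field_simp
  try ring
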